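/- Let K be a field, L a Lie algebra over K, and U(L) its universal enveloping algebra with canonical map ι : L → U(L). Let x ∈ L be such that the adjoint endomorphism ad x : L → L, y ↦ ⁅x, y⁆, is nilpotent. Then the inner derivation D of U(L) defined by D(u) = ι(x) * u − u * ι(x) is locally nilpotent: for every u ∈ U(L) there exists N such that D^N(u) = 0. -/

import Mathlib

section Aux

variable {K A : Type*} [Field K] [Ring A] [Algebra K A]

private lemma innerD_apply (a : A) (u : A) :
    (LinearMap.mulLeft K a - LinearMap.mulRight K a) u = a * u - u * a := rfl

private lemma innerD_leibniz (a u v : A) :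
    (LinearMap.mulLeft K a - LinearMap.mulRight K a) (u * v) =
      (LinearMap.mulLeft K a - LinearMap.mulRight K a) u * v +
        u * (LinearMap.mulLeft K a - LinearMap.mulRight K a) v := by
  simp only [innerD_apply]
  noncomm_ring

private lemma innerD_pow_zero_of_le (a : A) {m n : ℕ} (h : m ≤ n) {u : A}
    (hu : ((LinearMap.mulLeft K a - LinearMap.mulRight K a) ^ m) u = 0) :
    ((LinearMap.mulLeft K a - LinearMap.mulRight K a) ^ n) u = 0 := by
  obtain ⟨k, rfl⟩ := Nat.exists_eq_add_of_le h
  rw [add_comm, pow_add, Module.End.mul_apply, hu, map_zero]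

private lemma innerD_pow_mul (a : A) :
    ∀ (k m n : ℕ), m + n ≤ k → ∀ u v : A,
      ((LinearMap.mulLeft K a - LinearMap.mulRight K a) ^ m) u = 0 →
      ((LinearMap.mulLeft K a - LinearMap.mulRight K a) ^ n) v = 0 →
      ((LinearMap.mulLeft K a - LinearMap.mulRight K a) ^ k) (u * v) = 0 := by
  set D := LinearMap.mulLeft K a - LinearMap.mulRight K a with hD
  intro k
  induction k with
  | zero =>
    intro m n hmn u v hu hv
    obtain ⟨rfl, rfl⟩ : m = 0 ∧ n = 0 := by omega
    simp only [pow_zero, Module.End.one_apply] at hu hv ⊢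
    rw [hu, zero_mul]
  | succ k ih =>
    intro m n hmn u v hu hv
    rcases Nat.eq_zero_or_pos m with hm | hm
    · subst hm
      simp only [pow_zero, Module.End.one_apply] at hu
      rw [hu, zero_mul, map_zero]
    rcases Nat.eq_zero_or_pos n with hn | hn
    · subst hn
      simp only [pow_zero, Module.End.one_apply] at hv
      rw [hv, mul_zero, map_zero]
    have hk : D ^ (k + 1) = D ^ k * D := by rw [← pow_succ]
    rw [hk, Module.End.mul_apply, innerD_leibniz, map_add]
    have h1 : (D ^ k) (D u * v) = 0 := by
      refine ih (m - 1) n (by omega) (D u) v ?_ hv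
      have : D ^ (m - 1) * D = D ^ m := by
        rw [← pow_succ]; congr 1; omega
      rw [← Module.End.mul_apply, this, hu]
    have h2 : (D ^ k) (u * D v) = 0 := by
      refine ih m (n - 1) (by omega) u (D v) hu ?_
      have : D ^ (n - 1) * D = D ^ n := by
        rw [← pow_succ]; congr 1; omega
      rw [← Module.End.mul_apply, this, hv]
    rw [h1, h2, add_zero]

end Aux

/-- If `ad x` is nilpotent on `L`, then the inner derivation
`u ↦ ι(x) * u - u * ι(x)` of the universal enveloping algebra is locally nilpotent. -/
theorem innerDerivation_locallyNilpotent_of_ad_nilpotent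
    {K L : Type*} [Field K] [LieRing L] [LieAlgebra K L]
    (x : L) (hx : IsNilpotent (LieAlgebra.ad K L x)) :
    ∀ u : UniversalEnvelopingAlgebra K L, ∃ N : ℕ,
      ((LinearMap.mulLeft K (UniversalEnvelopingAlgebra.ι K x) -
        LinearMap.mulRight K (UniversalEnvelopingAlgebra.ι K x)) ^ N) u = 0 := by
  set a := UniversalEnvelopingAlgebra.ι K x with ha
  set D : UniversalEnvelopingAlgebra K L →ₗ[K] UniversalEnvelopingAlgebra K L :=
    LinearMap.mulLeft K a - LinearMap.mulRight K a with hDdef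
  obtain ⟨n, hn⟩ := hx
  -- D acts on ι(L) as ι ∘ ad x
  have hDι : ∀ y : L, D (UniversalEnvelopingAlgebra.ι K y) =
      UniversalEnvelopingAlgebra.ι K (⁅x, y⁆) := by
    intro y
    letI : LieRing (UniversalEnvelopingAlgebra K L) := LieRing.ofAssociativeRing
    rw [hDdef, innerD_apply, LieHom.map_lie, Ring.lie_def]
  have hDιpow : ∀ (k : ℕ) (y : L), (D ^ k) (UniversalEnvelopingAlgebra.ι K y) =
      UniversalEnvelopingAlgebra.ι K (((LieAlgebra.ad K L x) ^ k) y) := by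
    intro k
    induction k with
    | zero => intro y; simp
    | succ k ih =>
      intro y
      rw [pow_succ', pow_succ', Module.End.mul_apply, Module.End.mul_apply, ih, hDι]
      rfl
  intro u
  -- every element of U(L) is the image of an element of the tensor algebra
  obtain ⟨t, rfl⟩ : ∃ t, UniversalEnvelopingAlgebra.mkAlgHom K L t = u :=
    RingCon.mkₐ_surjective (α := K) _ u
  induction t using TensorAlgebra.induction with
  | algebraMap r =>
    refine ⟨1, ?_⟩
    rw [pow_one, hDdef, innerD_apply, AlgHom.commutes]
    exact sub_eq_zero_of_eq (Algebra.commutes r a).symm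
  | ι y =>
    refine ⟨n, ?_⟩
    have : UniversalEnvelopingAlgebra.mkAlgHom K L (TensorAlgebra.ι K y) =
        UniversalEnvelopingAlgebra.ι K y := rfl
    rw [this, hDιpow, hn]
    simp
  | add s t hs ht =>
    obtain ⟨m, hm⟩ := hs
    obtain ⟨k, hk⟩ := ht
    refine ⟨max m k, ?_⟩
    rw [map_add, map_add,
      innerD_pow_zero_of_le a (le_max_left m k) hm,
      innerD_pow_zero_of_le a (le_max_right m k) hk, add_zero]
  | mul s t hs ht =>
    obtain ⟨m, hm⟩ := hs
    obtain ⟨k, hk⟩ := ht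
    exact ⟨m + k, by rw [map_mul]; exact innerD_pow_mul a (m + k) m k le_rfl _ _ hm hk⟩
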